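/- (Implicit Euler identity) Let κ : ℝ≥0 → ℝ be of class K¹, let ρ₁ > 0, 0 ≤ ρ₂ < 1, h > 0, and x_k ∈ ℝ, and set x_{k+1} = κ^{−1}((max{κ(|x_k|)^{1−ρ₂} − h/ρ₁, 0})^{1/(1−ρ₂)})·sign(x_k), where κ^{−1} is the inverse of κ as a bijection [0,∞) → [0,1). If x_{k+1} ≠ 0, then sign(x_{k+1}) = sign(x_k) and κ(|x_{k+1}|)^{1−ρ₂}·sign(x_{k+1}) = κ(|x_k|)^{1−ρ₂}·sign(x_k) − (h/ρ₁)·sign(x_{k+1}); i.e., the update is the implicit (backward) Euler step of the transformed system ẇ = −(1/ρ₁)·sign(w) in the coordinate w = κ(|x|)^{1−ρ₂}·sign(x). -/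

import Mathlib

/-- A function `κ : ℝ≥0 → ℝ` (modeled as `κ : ℝ → ℝ` with properties on `[0,∞)`)
is of class `K¹` if it is continuous, strictly increasing, `κ 0 = 0` and
`κ r → 1` as `r → ∞`. -/
def ClassK1 (κ : ℝ → ℝ) : Prop :=
  ContinuousOn κ (Set.Ici 0) ∧ StrictMonoOn κ (Set.Ici 0) ∧ κ 0 = 0 ∧
    Filter.Tendsto κ Filter.atTop (nhds 1)

/-- (Implicit Euler identity.)  If
`x_{k+1} = κinv((max{κ(|x_k|)^(1-ρ₂) - h/ρ₁, 0})^(1/(1-ρ₂)))·sign(x_k)` and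
`x_{k+1} ≠ 0`, then `sign(x_{k+1}) = sign(x_k)` and
`κ(|x_{k+1}|)^(1-ρ₂)·sign(x_{k+1}) = κ(|x_k|)^(1-ρ₂)·sign(x_k) - (h/ρ₁)·sign(x_{k+1})`,
i.e. the update is the implicit (backward) Euler step of `ẇ = -(1/ρ₁)·sign(w)`
in the coordinate `w = κ(|x|)^(1-ρ₂)·sign(x)`. -/
theorem implicit_euler_identity (κ κinv : ℝ → ℝ) (hκ : ClassK1 κ)
    (hinv_left : ∀ r : ℝ, 0 ≤ r → κinv (κ r) = r)
    (hinv_right : ∀ y : ℝ, 0 ≤ y → y < 1 → 0 ≤ κinv y ∧ κ (κinv y) = y)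
    (ρ₁ ρ₂ h : ℝ) (hρ₁ : 0 < ρ₁) (hρ₂0 : 0 ≤ ρ₂) (hρ₂1 : ρ₂ < 1) (hh : 0 < h)
    (xk xk1 : ℝ)
    (hstep : xk1 =
      κinv ((max ((κ |xk|) ^ (1 - ρ₂) - h / ρ₁) 0) ^ (1 / (1 - ρ₂))) *
        Real.sign xk)
    (hne : xk1 ≠ 0) :
    Real.sign xk1 = Real.sign xk ∧
      (κ |xk1|) ^ (1 - ρ₂) * Real.sign xk1 =
        (κ |xk|) ^ (1 - ρ₂) * Real.sign xk - (h / ρ₁) * Real.sign xk1 := by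
  obtain ⟨hcont, hmono, h0, hlim⟩ := hκ
  have hexp : 0 < 1 - ρ₂ := by linarith
  -- κ r < 1 for r ≥ 0
  have hlt1 : ∀ r : ℝ, 0 ≤ r → κ r < 1 := by
    intro r hr
    by_contra hge
    push_neg at hge
    have hr1 : (1 : ℝ) < κ (r + 1) :=
      lt_of_le_of_lt hge (hmono (Set.mem_Ici.mpr hr) (Set.mem_Ici.mpr (by linarith)) (by linarith))
    have hev : ∀ᶠ s in Filter.atTop, κ s < κ (r + 1) :=
      hlim.eventually_lt_const hr1
    obtain ⟨N, hN⟩ := Filter.eventually_atTop.mp hev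
    set s : ℝ := max N (r + 2) with hs
    have h2 : κ (r + 1) < κ s := by
      apply hmono (Set.mem_Ici.mpr (by linarith))
        (Set.mem_Ici.mpr (le_trans (by linarith : (0:ℝ) ≤ r + 2) (le_max_right _ _)))
      exact lt_of_lt_of_le (by linarith) (le_max_right _ _)
    have h3 := hN s (le_max_left _ _)
    linarith
  -- nonneg
  have hnn : ∀ r : ℝ, 0 ≤ r → 0 ≤ κ r := by
    intro r hr
    rcases eq_or_lt_of_le hr with he | hl
    · rw [← he, h0]
    · have := hmono (Set.mem_Ici.mpr le_rfl) (Set.mem_Ici.mpr hr) hl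
      linarith [h0 ▸ this]
  set M : ℝ := max ((κ |xk|) ^ (1 - ρ₂) - h / ρ₁) 0 with hM
  set a : ℝ := M ^ (1 / (1 - ρ₂)) with ha
  have hMnn : 0 ≤ M := le_max_right _ _
  have hκabs_nn : 0 ≤ κ |xk| := hnn _ (abs_nonneg xk)
  have hκabs_lt : κ |xk| < 1 := hlt1 _ (abs_nonneg xk)
  have hM1 : M < 1 := by
    apply max_lt _ one_pos
    have : (κ |xk|) ^ (1 - ρ₂) ≤ 1 := by
      calc (κ |xk|) ^ (1 - ρ₂) ≤ 1 ^ (1 - ρ₂) :=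
        Real.rpow_le_rpow hκabs_nn hκabs_lt.le hexp.le
      _ = 1 := Real.one_rpow _
    have := div_pos hh hρ₁
    linarith
  have hann : 0 ≤ a := Real.rpow_nonneg hMnn _
  have ha1 : a < 1 := by
    calc a < 1 ^ (1 / (1 - ρ₂)) :=
      Real.rpow_lt_rpow hMnn hM1 (by positivity)
    _ = 1 := Real.one_rpow _
  obtain ⟨hkinv_nn, hkinv_eq⟩ := hinv_right a hann ha1
  -- xk ≠ 0
  have hxk : xk ≠ 0 := by
    rintro rfl
    simp [Real.sign_zero] at hstep
    exact hne hstep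
  have hM0 : M ≠ 0 := by
    intro hM0
    have : a = 0 := by
      rw [ha, hM0, Real.zero_rpow (by positivity)]
    have : κinv a = 0 := by
      calc κinv a = κinv (κ 0) := by rw [this, h0]
      _ = 0 := hinv_left 0 le_rfl
    rw [hstep, this, zero_mul] at hne
    exact hne rfl
  have hMeq : M = (κ |xk|) ^ (1 - ρ₂) - h / ρ₁ := by
    rcases max_cases ((κ |xk|) ^ (1 - ρ₂) - h / ρ₁) 0 with ⟨h1, _⟩ | ⟨h1, _⟩
    · exact h1
    · exact absurd h1 hM0
  have hkinv_pos : 0 < κinv a := by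
    rcases eq_or_lt_of_le hkinv_nn with he | hl
    · exfalso
      have : a = 0 := by rw [← hkinv_eq, ← he, h0]
      have : M = 0 := by
        have := congrArg (· ^ (1 - ρ₂)) this
        change a ^ (1 - ρ₂) = (0:ℝ) ^ (1 - ρ₂) at this
        rwa [← Real.rpow_mul hMnn,
          one_div_mul_cancel (ne_of_gt hexp), Real.rpow_one,
          Real.zero_rpow (ne_of_gt hexp)] at this
      exact hM0 this
    · exact hl
  -- |xk1| = κinv a and sign xk1 = sign xk
  have hsign : Real.sign xk = 1 ∨ Real.sign xk = -1 := by
    rcases lt_trichotomy xk 0 with h1 | h1 | h1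
    · right; exact Real.sign_of_neg h1
    · exact absurd h1 hxk
    · left; exact Real.sign_of_pos h1
  have habs : |xk1| = κinv a := by
    rw [hstep, abs_mul]
    rcases hsign with hs | hs <;> rw [hs] <;>
      simp [abs_of_nonneg hkinv_nn]
  have hsigneq : Real.sign xk1 = Real.sign xk := by
    rcases hsign with hs | hs <;> rw [hstep, hs]
    · simp [Real.sign_of_pos hkinv_pos]
    · have : κinv a * (-1 : ℝ) < 0 := by nlinarith
      rw [Real.sign_of_neg this, ← hs]
  refine ⟨hsigneq, ?_⟩
  have hκ1 : κ |xk1| = a := by rw [habs, hkinv_eq]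
  have hpow : (κ |xk1|) ^ (1 - ρ₂) = M := by
    rw [hκ1, ha, ← Real.rpow_mul hMnn,
      one_div_mul_cancel (ne_of_gt hexp), Real.rpow_one]
  rw [hpow, hsigneq, hMeq]
  ring
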